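/- Let (a, b, c) be a 2-color Sturmian lattice with passage κ and gap words (a_i), (b_j), (c_k). If the word (a_i) is strictly 2-balanced (i.e., 2-balanced but not 1-balanced), then the words (b_j) and (c_k) are both 1-balanced and periodic (there exists p ≥ 1 with b_{j+p} = b_j for all j ∈ ℤ, and similarly for c). -/

import Mathlib

/-- The number of 1's in the factor `w_{[i, i+n)}` of a bi-infinite word `w : ℤ → ℤ`
(with values in {0,1}). -/
noncomputable def factorHeight (w : ℤ → ℤ) (i : ℤ) (n : ℕ) : ℤ :=
  ∑ m ∈ Finset.Ico i (i + (n : ℤ)), w m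

/-- A bi-infinite word `w : ℤ → ℤ` (with values in {0,1}) is `C`-balanced if the numbers of
1's in any two factors of equal length differ by at most `C`. -/
def IsBalancedWord (w : ℤ → ℤ) (C : ℤ) : Prop :=
  ∀ (i i' : ℤ) (n : ℕ), |factorHeight w i n - factorHeight w i' n| ≤ C

lemma fh_zero (w : ℤ → ℤ) (i : ℤ) : factorHeight w i 0 = 0 := by
  simp [factorHeight]

lemma sum_split (w : ℤ → ℤ) (x y z : ℤ) (h1 : x ≤ y) (h2 : y ≤ z) :
    ∑ m ∈ Finset.Ico x z, w m = (∑ m ∈ Finset.Ico x y, w m) + ∑ m ∈ Finset.Ico y z, w m := by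
  rw [← Finset.Ico_union_Ico_eq_Ico h1 h2,
    Finset.sum_union (Finset.Ico_disjoint_Ico_consecutive x y z)]

lemma sum_single (w : ℤ → ℤ) (k : ℤ) : ∑ m ∈ Finset.Ico k (k+1), w m = w k := by
  have : Finset.Ico k (k+1) = {k} := by ext x; simp; omega
  rw [this, Finset.sum_singleton]

lemma fh_top (w : ℤ → ℤ) (i : ℤ) (n : ℕ) :
    factorHeight w i (n+1) = factorHeight w i n + w (i + n) := by
  unfold factorHeight
  rw [show i + ((n:ℕ)+1 : ℕ) = (i + (n:ℤ)) + 1 by push_cast; ring]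
  rw [sum_split w i (i + (n:ℤ)) (i + (n:ℤ) + 1) (by omega) (by omega), sum_single]

lemma fh_bot (w : ℤ → ℤ) (i : ℤ) (n : ℕ) :
    factorHeight w i (n+1) = w i + factorHeight w (i+1) n := by
  unfold factorHeight
  rw [show i + ((n:ℕ)+1 : ℕ) = (i + 1) + (n:ℤ) by push_cast; ring]
  rw [sum_split w i (i+1) (i + 1 + (n:ℤ)) (by omega) (by omega), sum_single]

/-- The "phase" function of the Sturmian lattice: `a i + b j + c k + 1/2` with `k = -i-j`. -/
noncomputable def Efun (a b c : ℤ → ℝ) (i j : ℤ) : ℝ := a i + b j + c (-i - j) + 1 / 2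

lemma E01 (a b c : ℤ → ℝ)
    (hSL : ∀ i j k : ℤ, i + j + k = 0 → |a i + b j + c k| = 1 / 2) :
    ∀ i j : ℤ, Efun a b c i j = 0 ∨ Efun a b c i j = 1 := by
  intro i j
  have h := hSL i j (-i - j) (by ring)
  rcases (abs_eq (by norm_num : (0:ℝ) ≤ 1/2)).mp h with h' | h'
  · right; unfold Efun; linarith
  · left; unfold Efun; linarith

/-- Telescoping identity relating `wa`-factors and `wc`-factors. -/
lemma S1 (a b c : ℤ → ℝ) (κ : ℝ) (wa wc : ℤ → ℤ)
    (hA : ∀ i : ℤ, a (i+1) - a i = κ + (wa i : ℝ))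
    (hC : ∀ k : ℤ, c (k+1) - c k = κ + (wc k : ℝ)) (j : ℤ) :
    ∀ (n : ℕ) (i0 : ℤ), (factorHeight wa i0 n : ℝ) - factorHeight wc (-(i0+(n:ℤ))-j) n
      = Efun a b c (i0+(n:ℤ)) j - Efun a b c i0 j := by
  intro n
  induction n with
  | zero => intro i0; simp [fh_zero]
  | succ n ih =>
    intro i0
    have h1 : ((factorHeight wa i0 (n+1) : ℤ) : ℝ)
        = (factorHeight wa i0 n : ℝ) + (wa (i0+(n:ℤ)) : ℝ) := by
      exact_mod_cast fh_top wa i0 n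
    have h2' := fh_bot wc (-(i0+(n:ℤ))-j-1) n
    rw [show (-(i0+(n:ℤ))-j-1) + 1 = -(i0+(n:ℤ))-j by ring] at h2'
    have h2 : ((factorHeight wc (-(i0+(n:ℤ))-j-1) (n+1) : ℤ) : ℝ)
        = (wc (-(i0+(n:ℤ))-j-1) : ℝ) + (factorHeight wc (-(i0+(n:ℤ))-j) n : ℝ) := by
      exact_mod_cast h2'
    have key : (wa (i0+(n:ℤ)) : ℝ) - wc (-(i0+(n:ℤ))-j-1)
        = Efun a b c (i0+(n:ℤ)+1) j - Efun a b c (i0+(n:ℤ)) j := by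
      have e1 := hA (i0+(n:ℤ))
      have e2 := hC (-(i0+(n:ℤ))-j-1)
      rw [show (-(i0+(n:ℤ))-j-1) + 1 = -(i0+(n:ℤ))-j by ring] at e2
      unfold Efun
      rw [show -(i0+(n:ℤ)+1) - j = -(i0+(n:ℤ))-j-1 by ring]
      linarith
    have hih := ih i0
    push_cast
    rw [show -(i0+((n:ℤ)+1))-j = -(i0+(n:ℤ))-j-1 by ring,
      show i0+((n:ℤ)+1) = i0+(n:ℤ)+1 by ring]
    push_cast at h1 h2 hih
    linarith

/-- Telescoping identity relating `wa`-factors and `wb`-factors. -/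
lemma S3 (a b c : ℤ → ℝ) (κ : ℝ) (wa wb : ℤ → ℤ)
    (hA : ∀ i : ℤ, a (i+1) - a i = κ + (wa i : ℝ))
    (hB : ∀ k : ℤ, b (k+1) - b k = κ + (wb k : ℝ)) :
    ∀ (n : ℕ) (i0 j0 : ℤ), (factorHeight wa i0 n : ℝ) - factorHeight wb (j0-(n:ℤ)) n
      = Efun a b c (i0+(n:ℤ)) (j0-(n:ℤ)) - Efun a b c i0 j0 := by
  intro n
  induction n with
  | zero => intro i0 j0; simp [fh_zero]
  | succ n ih =>
    intro i0 j0
    have h1 : ((factorHeight wa i0 (n+1) : ℤ) : ℝ)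
        = (factorHeight wa i0 n : ℝ) + (wa (i0+(n:ℤ)) : ℝ) := by
      exact_mod_cast fh_top wa i0 n
    have h2' := fh_bot wb (j0-(n:ℤ)-1) n
    rw [show (j0-(n:ℤ)-1) + 1 = j0-(n:ℤ) by ring] at h2'
    have h2 : ((factorHeight wb (j0-(n:ℤ)-1) (n+1) : ℤ) : ℝ)
        = (wb (j0-(n:ℤ)-1) : ℝ) + (factorHeight wb (j0-(n:ℤ)) n : ℝ) := by
      exact_mod_cast h2'
    have key : (wa (i0+(n:ℤ)) : ℝ) - wb (j0-(n:ℤ)-1)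
        = Efun a b c (i0+(n:ℤ)+1) (j0-(n:ℤ)-1) - Efun a b c (i0+(n:ℤ)) (j0-(n:ℤ)) := by
      have e1 := hA (i0+(n:ℤ))
      have e2 := hB (j0-(n:ℤ)-1)
      rw [show (j0-(n:ℤ)-1) + 1 = j0-(n:ℤ) by ring] at e2
      unfold Efun
      rw [show -(i0+(n:ℤ)+1) - (j0-(n:ℤ)-1) = -(i0+(n:ℤ)) - (j0-(n:ℤ)) by ring]
      linarith
    have hih := ih i0 j0
    push_cast
    rw [show j0-((n:ℤ)+1) = j0-(n:ℤ)-1 by ring,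
      show i0+((n:ℤ)+1) = i0+(n:ℤ)+1 by ring]
    push_cast at h1 h2 hih
    linarith


theorem stmt9 (a b c : ℤ → ℝ) (κ : ℝ) (hκ : 1 ≤ κ)
    (hSL : ∀ i j k : ℤ, i + j + k = 0 → |a i + b j + c k| = 1 / 2)
    (wa wb wc : ℤ → ℤ)
    (hga : ∀ i : ℤ, (wa i = 0 ∧ a (i + 1) - a i = κ) ∨ (wa i = 1 ∧ a (i + 1) - a i = κ + 1))
    (hgb : ∀ j : ℤ, (wb j = 0 ∧ b (j + 1) - b j = κ) ∨ (wb j = 1 ∧ b (j + 1) - b j = κ + 1))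
    (hgc : ∀ k : ℤ, (wc k = 0 ∧ c (k + 1) - c k = κ) ∨ (wc k = 1 ∧ c (k + 1) - c k = κ + 1))
    (hstrict : IsBalancedWord wa 2 ∧ ¬ IsBalancedWord wa 1) :
    (IsBalancedWord wb 1 ∧ ∃ p : ℤ, 1 ≤ p ∧ ∀ j : ℤ, wb (j + p) = wb j) ∧
    (IsBalancedWord wc 1 ∧ ∃ p : ℤ, 1 ≤ p ∧ ∀ k : ℤ, wc (k + p) = wc k) := by
  obtain ⟨hbal2, hnot1⟩ := hstrict
  have hA : ∀ i : ℤ, a (i+1) - a i = κ + (wa i : ℝ) := by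
    intro i; rcases hga i with ⟨h', h⟩ | ⟨h', h⟩ <;> rw [h, h'] <;> norm_num
  have hB : ∀ i : ℤ, b (i+1) - b i = κ + (wb i : ℝ) := by
    intro i; rcases hgb i with ⟨h', h⟩ | ⟨h', h⟩ <;> rw [h, h'] <;> norm_num
  have hC : ∀ i : ℤ, c (i+1) - c i = κ + (wc i : ℝ) := by
    intro i; rcases hgc i with ⟨h', h⟩ | ⟨h', h⟩ <;> rw [h, h'] <;> norm_num
  have hb01 : ∀ i j : ℤ, 0 ≤ Efun a b c i j ∧ Efun a b c i j ≤ 1 := by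
    intro i j; rcases E01 a b c hSL i j with h | h <;> rw [h] <;> norm_num
  -- extract a length n where wa has two factors of heights differing by exactly 2
  rw [IsBalancedWord] at hnot1
  push_neg at hnot1
  obtain ⟨x, y, n, hxy⟩ := hnot1
  have habs := hbal2 x y n
  obtain ⟨i1, i2, hd⟩ : ∃ i1 i2 : ℤ,
      factorHeight wa i1 n - factorHeight wa i2 n = 2 := by
    rcases abs_cases (factorHeight wa x n - factorHeight wa y n) with ⟨he, _⟩ | ⟨he, _⟩ <;>
      rw [he] at hxy habs
    · exact ⟨x, y, by omega⟩
    · exact ⟨y, x, by omega⟩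
  have hn : 1 ≤ (n:ℤ) := by
    rcases Nat.eq_zero_or_pos n with h | h
    · subst h; rw [fh_zero, fh_zero] at hd; omega
    · exact_mod_cast h
  -- the key rows of the phase function
  have hrow : ∀ j : ℤ, Efun a b c i1 j = 0 ∧ Efun a b c (i1+(n:ℤ)) j = 1 := by
    intro j
    have hA1 := S1 a b c κ wa wc hA hC j n i1
    have hA2 := S1 a b c κ wa wc hA hC (j + i1 - i2) n i2
    rw [show -(i2+(n:ℤ)) - (j + i1 - i2) = -(i1+(n:ℤ)) - j by ring] at hA2
    have hdr : (factorHeight wa i1 n : ℝ) - factorHeight wa i2 n = 2 := by exact_mod_cast hd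
    have e1 : Efun a b c (i1+(n:ℤ)) j = 1 :=
      le_antisymm (hb01 _ _).2 (by
        linarith [(hb01 i1 j).1, (hb01 (i2+(n:ℤ)) (j+i1-i2)).1, (hb01 i2 (j+i1-i2)).2])
    have e0 : Efun a b c i1 j = 0 :=
      le_antisymm (by
        linarith [(hb01 (i1+(n:ℤ)) j).2, (hb01 (i2+(n:ℤ)) (j+i1-i2)).1,
          (hb01 i2 (j+i1-i2)).2]) (hb01 _ _).1
    exact ⟨e0, e1⟩
  constructor
  · constructor
    · -- wb is 1-balanced
      intro m m' L
      have h1 := S3 a b c κ wa wb hA hB L i1 (m + (L:ℤ))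
      rw [show m + (L:ℤ) - (L:ℤ) = m by ring, (hrow (m + (L:ℤ))).1] at h1
      have h2 := S3 a b c κ wa wb hA hB L i1 (m' + (L:ℤ))
      rw [show m' + (L:ℤ) - (L:ℤ) = m' by ring, (hrow (m' + (L:ℤ))).1] at h2
      have : |(factorHeight wb m L : ℝ) - factorHeight wb m' L| ≤ 1 := by
        rw [abs_le]
        constructor <;>
          linarith [(hb01 (i1+(L:ℤ)) m).1, (hb01 (i1+(L:ℤ)) m).2,
            (hb01 (i1+(L:ℤ)) m').1, (hb01 (i1+(L:ℤ)) m').2]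
      exact_mod_cast this
    · -- wb is periodic with period n
      refine ⟨(n:ℤ), hn, fun j => ?_⟩
      have hcst : ∀ m : ℤ, factorHeight wb m n = factorHeight wa i1 n - 1 := by
        intro m
        have h1 := S3 a b c κ wa wb hA hB n i1 (m + (n:ℤ))
        rw [show m + (n:ℤ) - (n:ℤ) = m by ring, (hrow (m + (n:ℤ))).1, (hrow m).2] at h1
        have : (factorHeight wb m n : ℝ) = (factorHeight wa i1 n : ℝ) - 1 := by linarith
        exact_mod_cast this
      have e1 := fh_top wb j n
      have e2 := fh_bot wb j n
      have c1 := hcst j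
      have c2 := hcst (j+1)
      omega
  · constructor
    · -- wc is 1-balanced
      intro m m' L
      have h1 := S1 a b c κ wa wc hA hC (-(i1+(L:ℤ)) - m) L i1
      rw [show -(i1+(L:ℤ)) - (-(i1+(L:ℤ)) - m) = m by ring,
        (hrow (-(i1+(L:ℤ)) - m)).1] at h1
      have h2 := S1 a b c κ wa wc hA hC (-(i1+(L:ℤ)) - m') L i1
      rw [show -(i1+(L:ℤ)) - (-(i1+(L:ℤ)) - m') = m' by ring,
        (hrow (-(i1+(L:ℤ)) - m')).1] at h2
      have : |(factorHeight wc m L : ℝ) - factorHeight wc m' L| ≤ 1 := by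
        rw [abs_le]
        constructor <;>
          linarith [(hb01 (i1+(L:ℤ)) (-(i1+(L:ℤ)) - m)).1,
            (hb01 (i1+(L:ℤ)) (-(i1+(L:ℤ)) - m)).2,
            (hb01 (i1+(L:ℤ)) (-(i1+(L:ℤ)) - m')).1,
            (hb01 (i1+(L:ℤ)) (-(i1+(L:ℤ)) - m')).2]
      exact_mod_cast this
    · -- wc is periodic with period n
      refine ⟨(n:ℤ), hn, fun k => ?_⟩
      have hcst : ∀ m : ℤ, factorHeight wc m n = factorHeight wa i1 n - 1 := by
        intro m
        have h1 := S1 a b c κ wa wc hA hC (-(i1+(n:ℤ)) - m) n i1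
        rw [show -(i1+(n:ℤ)) - (-(i1+(n:ℤ)) - m) = m by ring,
          (hrow (-(i1+(n:ℤ)) - m)).1, (hrow (-(i1+(n:ℤ)) - m)).2] at h1
        have : (factorHeight wc m n : ℝ) = (factorHeight wa i1 n : ℝ) - 1 := by linarith
        exact_mod_cast this
      have e1 := fh_top wc k n
      have e2 := fh_bot wc k n
      have c1 := hcst k
      have c2 := hcst (k+1)
      omega
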